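/- Let F be a cumulative distribution function on ℝ whose upper tail has hazard rate h on [t₀,∞) (i.e. F̄(t) = F̄(t₀)·exp(−∫_{t₀}^t h(u)du) for t ≥ t₀, F̄(t₀) > 0) and whose lower tail has hazard rate h₋ on [t₀,∞) (i.e. F(−t) = F(−t₀)·exp(−∫_{t₀}^t h₋(u)du) for t ≥ t₀, F(−t₀) > 0). Assume F is tail balanced: F̄(t)/F(−t) converges to a positive finite limit as t → ∞. Then ∫_{t₀}^t (h(u) − h₋(u))du has a finite limit as t → ∞; and if in addition h is regularly varying of index β > −1 and h₋ is regularly varying of index β′ > −1, then h(t)/h₋(t) → 1 as t → ∞. -/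

import Mathlib

open MeasureTheory Filter Set

noncomputable section
set_option maxHeartbeats 2000000

lemma null_preimage_mul_right {c : ℝ} (hc : c ≠ 0) {X : Set ℝ} (hX : volume X = 0) :
    volume ((fun v : ℝ => v * c) ⁻¹' X) = 0 := by
  set X' := toMeasurable volume X with hX'
  have hsub : (fun v : ℝ => v * c) ⁻¹' X ⊆ (fun v : ℝ => c * v) ⁻¹' X' := by
    intro v hv
    simpa [mul_comm] using subset_toMeasurable volume X hv
  refine le_antisymm (le_trans (measure_mono hsub) ?_) zero_le
  have hmap := Real.map_volume_mul_left hc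
  have : volume ((fun v : ℝ => c * v) ⁻¹' X') = Measure.map (fun v : ℝ => c * v) volume X' := by
    rw [Measure.map_apply (measurable_const_mul c) (measurableSet_toMeasurable volume X)]
  rw [this, hmap]
  simp only [Measure.smul_apply, smul_eq_mul]
  rw [measure_toMeasurable, hX, mul_zero]

lemma vol_preimage_mul_right {c : ℝ} (hc : c ≠ 0) {X : Set ℝ} (hX : MeasurableSet X) :
    volume ((fun v : ℝ => v * c) ⁻¹' X) = ENNReal.ofReal |c⁻¹| * volume X := by
  have heq : (fun v : ℝ => v * c) ⁻¹' X = (fun v : ℝ => c * v) ⁻¹' X := by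
    ext v; simp [mul_comm]
  rw [heq]
  have : volume ((fun v : ℝ => c * v) ⁻¹' X) = Measure.map (fun v : ℝ => c * v) volume X := by
    rw [Measure.map_apply (measurable_const_mul c) hX]
  rw [this, Real.map_volume_mul_left hc]
  simp

lemma rpow_bounds {β M : ℝ} (hM : 1 ≤ M) {x : ℝ} (hx : x ∈ Icc (1:ℝ) M) :
    Real.exp (min 0 (Real.log M * β)) ≤ x ^ β ∧
      x ^ β ≤ Real.exp (max 0 (Real.log M * β)) := by
  have hx0 : (0:ℝ) < x := lt_of_lt_of_le one_pos hx.1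
  have hlx0 : 0 ≤ Real.log x := Real.log_nonneg hx.1
  have hlxM : Real.log x ≤ Real.log M := Real.log_le_log hx0 hx.2
  rw [Real.rpow_def_of_pos hx0]
  constructor
  · apply Real.exp_le_exp.2
    rcases le_total 0 β with hβ | hβ
    · calc min 0 (Real.log M * β) ≤ 0 := min_le_left _ _
        _ ≤ Real.log x * β := mul_nonneg hlx0 hβ
    · calc min 0 (Real.log M * β) ≤ Real.log M * β := min_le_right _ _
        _ ≤ Real.log x * β := mul_le_mul_of_nonpos_right hlxM hβ
  · apply Real.exp_le_exp.2
    rcases le_total 0 β with hβ | hβ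
    · calc Real.log x * β ≤ Real.log M * β := mul_le_mul_of_nonneg_right hlxM hβ
        _ ≤ max 0 (Real.log M * β) := le_max_right _ _
    · calc Real.log x * β ≤ 0 := mul_nonpos_of_nonneg_of_nonpos hlx0 hβ
        _ ≤ max 0 (Real.log M * β) := le_max_left _ _

/-- Uniform convergence theorem for (a.e.-measurable) regularly varying functions. -/
lemma uct {g g' : ℝ → ℝ} {T β : ℝ} (hg' : Measurable g')
    (hae : volume {x | T ≤ x ∧ g x ≠ g' x} = 0)
    (hpos : ∀ᶠ t in atTop, 0 < g t)
    (hrv : ∀ a : ℝ, 0 < a → Tendsto (fun t => g (a * t) / g t) atTop (nhds (a ^ β)))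
    {A : ℝ} (hA : 1 < A) {ε : ℝ} (hε : 0 < ε) :
    ∀ᶠ t in atTop, ∀ s ∈ Icc (1:ℝ) A, |g (s * t) / g t - s ^ β| ≤ ε := by
  by_contra hcon
  rw [Filter.not_eventually] at hcon
  obtain ⟨T₀, hT₀⟩ := eventually_atTop.mp hpos
  -- the compact window
  set M : ℝ := A ^ 2 with hMdef
  have hAM : A ≤ M := by nlinarith
  have hM1 : 1 < M := by nlinarith
  -- rpow bounds on [1, M]
  set c : ℝ := Real.exp (min 0 (Real.log M * β)) with hcdef
  set C : ℝ := Real.exp (max 0 (Real.log M * β)) with hCdef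
  have hc0 : 0 < c := Real.exp_pos _
  have hC0 : 0 < C := Real.exp_pos _
  have hcC : c ≤ C := Real.exp_le_exp.2 (min_le_of_left_le (le_max_left _ _))
  have hbounds : ∀ x ∈ Icc (1:ℝ) M, c ≤ x ^ β ∧ x ^ β ≤ C :=
    fun x hx => rpow_bounds hM1.le hx
  -- the small epsilon
  set ε' : ℝ := min (c/2) (ε * c^2 / (4*C)) with hε'def
  have hε'0 : 0 < ε' := lt_min (by positivity) (by positivity)
  have hε'c : ε' ≤ c/2 := min_le_left _ _
  have hε'ε : ε' ≤ ε * c^2 / (4*C) := min_le_right _ _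
  -- extract bad sequences
  have hseq : ∀ n : ℕ, ∃ t : ℝ, ((n:ℝ) + 1 ≤ t ∧ T ≤ t) ∧
      ∃ s, s ∈ Icc (1:ℝ) A ∧ ε < |g (s * t) / g t - s ^ β| := by
    intro n
    rcases frequently_atTop.mp hcon (max ((n:ℝ)+1) T) with ⟨t, ht, hbad⟩
    push_neg at hbad
    obtain ⟨s, hs, hsbad⟩ := hbad
    exact ⟨t, ⟨le_trans (le_max_left _ _) ht, le_trans (le_max_right _ _) ht⟩, s, hs, hsbad⟩
  choose t ht s hs hbad using hseq
  have ht1 : ∀ n : ℕ, (n:ℝ) + 1 ≤ t n := fun n => (ht n).1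
  have htT : ∀ n, T ≤ t n := fun n => (ht n).2
  have htpos : ∀ n : ℕ, 0 < t n := by
    intro n
    have : (0:ℝ) < (n:ℝ) + 1 := by positivity
    linarith [ht1 n]
  have hs1 : ∀ n, 1 ≤ s n := fun n => (hs n).1
  have hsA : ∀ n, s n ≤ A := fun n => (hs n).2
  have htst : ∀ n, t n ≤ s n * t n := fun n =>
    le_mul_of_one_le_left (htpos n).le (hs1 n)
  have httop : Tendsto t atTop atTop :=
    tendsto_atTop_mono ht1 (tendsto_atTop_add_const_right _ 1 tendsto_natCast_atTop_atTop)
  have hsttop : Tendsto (fun n => s n * t n) atTop atTop :=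
    tendsto_atTop_mono htst httop
  -- measurable hull of the bad set
  set B' : Set ℝ := toMeasurable volume {x | T ≤ x ∧ g x ≠ g' x} with hB'def
  have hB'null : volume B' = 0 := by rw [measure_toMeasurable]; exact hae
  have hgg' : ∀ x, T ≤ x → x ∉ B' → g x = g' x := by
    intro x hx hxn
    by_contra hne
    exact hxn (subset_toMeasurable _ _ ⟨hx, hne⟩)
  -- the null exceptional sets
  set Z₁ : Set ℝ := ⋃ m, (fun v : ℝ => v * t m) ⁻¹' B' with hZ₁def
  set Z₂ : Set ℝ := ⋃ m, (fun v : ℝ => v * (s m * t m)) ⁻¹' B' with hZ₂def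
  have hZ₁null : volume Z₁ = 0 :=
    measure_iUnion_null fun m => null_preimage_mul_right (htpos m).ne' hB'null
  have hZ₂null : volume Z₂ = 0 :=
    measure_iUnion_null fun m =>
      null_preimage_mul_right (mul_pos (lt_of_lt_of_le one_pos (hs1 m)) (htpos m)).ne' hB'null
  -- the good sets
  set E : ℕ → Set ℝ := fun n =>
    {v : ℝ | ∀ m, n ≤ m → |g' (v * t m) / g (t m) - v ^ β| ≤ ε'} with hEdef
  set E' : ℕ → Set ℝ := fun n =>
    {v : ℝ | ∀ m, n ≤ m → |g' (v * (s m * t m)) / g (s m * t m) - v ^ β| ≤ ε'} with hE'def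
  have hEmeas : ∀ n, MeasurableSet (E n) := by
    intro n
    have : E n = ⋂ m, ⋂ _h : n ≤ m,
        (fun v : ℝ => |g' (v * t m) / g (t m) - v ^ β|) ⁻¹' Iic ε' := by
      ext v; simp [hEdef, Set.mem_iInter]
    rw [this]
    refine MeasurableSet.iInter fun m => MeasurableSet.iInter fun _ => ?_
    exact ((((hg'.comp (measurable_mul_const (t m))).div_const _).sub
      (measurable_id.pow_const β)).abs) measurableSet_Iic
  have hE'meas : ∀ n, MeasurableSet (E' n) := by
    intro n
    have : E' n = ⋂ m, ⋂ _h : n ≤ m,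
        (fun v : ℝ => |g' (v * (s m * t m)) / g (s m * t m) - v ^ β|) ⁻¹' Iic ε' := by
      ext v; simp [hE'def, Set.mem_iInter]
    rw [this]
    refine MeasurableSet.iInter fun m => MeasurableSet.iInter fun _ => ?_
    exact ((((hg'.comp (measurable_mul_const _)).div_const _).sub
      (measurable_id.pow_const β)).abs) measurableSet_Iic
  -- coverage of [1,M] by the E n, up to null sets
  have hcov : Icc (1:ℝ) M \ Z₁ ⊆ ⋃ n, E n := by
    intro v hv
    have hv1 : (1:ℝ) ≤ v := hv.1.1
    have hv0 : (0:ℝ) < v := lt_of_lt_of_le one_pos hv1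
    have hvZ : ∀ m, v * t m ∉ B' := by
      intro m hm
      exact hv.2 (Set.mem_iUnion.2 ⟨m, hm⟩)
    have hconv : Tendsto (fun m => g' (v * t m) / g (t m)) atTop (nhds (v ^ β)) := by
      refine Tendsto.congr' ?_ ((hrv v hv0).comp httop)
      filter_upwards [eventually_atTop.2 ⟨0, fun m _ => htT m⟩] with m hm
      have : T ≤ v * t m := le_trans hm (le_mul_of_one_le_left (htpos m).le hv1)
      rw [Function.comp_apply, hgg' _ this (hvZ m)]
    have := (Metric.tendsto_nhds.mp hconv ε' hε'0)
    obtain ⟨n₀, hn₀⟩ := eventually_atTop.mp this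
    refine Set.mem_iUnion.2 ⟨n₀, fun m hm => ?_⟩
    have := hn₀ m hm
    rw [Real.dist_eq] at this
    exact this.le
  have hcov' : Icc (1:ℝ) M \ Z₂ ⊆ ⋃ n, E' n := by
    intro v hv
    have hv1 : (1:ℝ) ≤ v := hv.1.1
    have hv0 : (0:ℝ) < v := lt_of_lt_of_le one_pos hv1
    have hvZ : ∀ m, v * (s m * t m) ∉ B' := by
      intro m hm
      exact hv.2 (Set.mem_iUnion.2 ⟨m, hm⟩)
    have hconv : Tendsto (fun m => g' (v * (s m * t m)) / g (s m * t m)) atTop (nhds (v ^ β)) := by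
      refine Tendsto.congr' ?_ ((hrv v hv0).comp hsttop)
      filter_upwards [eventually_atTop.2 ⟨0, fun m _ => le_trans (htT m) (htst m)⟩] with m hm
      have : T ≤ v * (s m * t m) := le_trans hm (le_mul_of_one_le_left
        (le_trans (htpos m).le (htst m)) hv1)
      rw [Function.comp_apply, hgg' _ this (hvZ m)]
    have := (Metric.tendsto_nhds.mp hconv ε' hε'0)
    obtain ⟨n₀, hn₀⟩ := eventually_atTop.mp this
    refine Set.mem_iUnion.2 ⟨n₀, fun m hm => ?_⟩
    have := hn₀ m hm
    rw [Real.dist_eq] at this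
    exact this.le
  -- measures of the complements tend to zero
  set D : ℕ → Set ℝ := fun n => Icc (1:ℝ) M \ E n with hDdef
  set D' : ℕ → Set ℝ := fun n => Icc (1:ℝ) M \ E' n with hD'def
  have hEmono : ∀ ⦃a b : ℕ⦄, a ≤ b → E a ⊆ E b := by
    intro a b hab v hv m hm
    exact hv m (le_trans hab hm)
  have hE'mono : ∀ ⦃a b : ℕ⦄, a ≤ b → E' a ⊆ E' b := by
    intro a b hab v hv m hm
    exact hv m (le_trans hab hm)
  have hDlim : Tendsto (fun n => volume (D n)) atTop (nhds 0) := by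
    have h1 : Tendsto (volume ∘ D) atTop (nhds (volume (⋂ n, D n))) := by
      refine tendsto_measure_iInter_atTop (fun n => (measurableSet_Icc.diff (hEmeas n)).nullMeasurableSet)
        (fun a b hab => Set.diff_subset_diff_right (hEmono hab)) ⟨0, ?_⟩
      exact ne_top_of_le_ne_top (by simp) (measure_mono Set.diff_subset)
    have h2 : volume (⋂ n, D n) = 0 := by
      refine le_antisymm (le_trans (measure_mono ?_) hZ₁null.le) zero_le
      intro v hv
      rw [Set.mem_iInter] at hv
      by_contra hvZ
      have := hcov ⟨(hv 0).1, hvZ⟩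
      rw [Set.mem_iUnion] at this
      obtain ⟨n, hn⟩ := this
      exact (hv n).2 hn
    rw [h2] at h1
    exact h1
  have hD'lim : Tendsto (fun n => volume (D' n)) atTop (nhds 0) := by
    have h1 : Tendsto (volume ∘ D') atTop (nhds (volume (⋂ n, D' n))) := by
      refine tendsto_measure_iInter_atTop (fun n => (measurableSet_Icc.diff (hE'meas n)).nullMeasurableSet)
        (fun a b hab => Set.diff_subset_diff_right (hE'mono hab)) ⟨0, ?_⟩
      exact ne_top_of_le_ne_top (by simp) (measure_mono Set.diff_subset)
    have h2 : volume (⋂ n, D' n) = 0 := by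
      refine le_antisymm (le_trans (measure_mono ?_) hZ₂null.le) zero_le
      intro v hv
      rw [Set.mem_iInter] at hv
      by_contra hvZ
      have := hcov' ⟨(hv 0).1, hvZ⟩
      rw [Set.mem_iUnion] at this
      obtain ⟨n, hn⟩ := this
      exact (hv n).2 hn
    rw [h2] at h1
    exact h1
  -- pick a good index n
  have hMA : (0:ℝ) < M - A := by rw [hMdef]; nlinarith
  set δ : ENNReal := ENNReal.ofReal ((M - A)/4) with hδdef
  have hδ0 : 0 < δ := ENNReal.ofReal_pos.2 (by linarith)
  set δ' : ENNReal := ENNReal.ofReal ((M - A)/(4*A)) with hδ'def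
  have hδ'0 : 0 < δ' := ENNReal.ofReal_pos.2 (by positivity)
  have hev1 : ∀ᶠ n in atTop, volume (D n) < δ := hDlim.eventually_lt_const hδ0
  have hev2 : ∀ᶠ n in atTop, volume (D' n) < δ' := hD'lim.eventually_lt_const hδ'0
  have hev3 : ∀ᶠ n : ℕ in atTop, T₀ ≤ t n := by
    have : Tendsto t atTop atTop := httop
    exact this.eventually_ge_atTop T₀
  obtain ⟨n, ⟨hn1, hn2⟩, hn3⟩ := ((hev1.and hev2).and hev3).exists
  -- the set of good scales
  have hsn0 : (0:ℝ) < s n := lt_of_lt_of_le one_pos (hs1 n)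
  set bad : Set ℝ := D n ∪ Z₁ ∪ (fun v : ℝ => v * (s n)⁻¹) ⁻¹' (D' n) with hbaddef
  have hbadvol : volume bad ≤ ENNReal.ofReal ((M - A)/2) := by
    have h3 : volume ((fun v : ℝ => v * (s n)⁻¹) ⁻¹' (D' n))
        = ENNReal.ofReal |((s n)⁻¹)⁻¹| * volume (D' n) := by
      exact vol_preimage_mul_right (inv_ne_zero hsn0.ne') (measurableSet_Icc.diff (hE'meas n))
    have h3' : volume ((fun v : ℝ => v * (s n)⁻¹) ⁻¹' (D' n)) ≤ ENNReal.ofReal ((M - A)/4) := by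
      rw [h3, inv_inv, abs_of_pos hsn0]
      calc ENNReal.ofReal (s n) * volume (D' n) ≤ ENNReal.ofReal A * δ' :=
            mul_le_mul' (ENNReal.ofReal_le_ofReal (hsA n)) hn2.le
        _ = ENNReal.ofReal (A * ((M - A)/(4*A))) := by
            rw [hδ'def, ← ENNReal.ofReal_mul (by linarith)]
        _ = ENNReal.ofReal ((M - A)/4) := by
            congr 1; field_simp
    calc volume bad ≤ volume (D n ∪ Z₁) + volume ((fun v : ℝ => v * (s n)⁻¹) ⁻¹' (D' n)) :=
          measure_union_le _ _
      _ ≤ (volume (D n) + volume Z₁) + ENNReal.ofReal ((M - A)/4) :=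
          add_le_add (measure_union_le _ _) h3'
      _ ≤ (δ + 0) + ENNReal.ofReal ((M - A)/4) :=
          add_le_add (add_le_add hn1.le hZ₁null.le) le_rfl
      _ = ENNReal.ofReal ((M - A)/4) + ENNReal.ofReal ((M - A)/4) := by rw [add_zero, hδdef]
      _ = ENNReal.ofReal ((M - A)/2) := by
          rw [← ENNReal.ofReal_add (by linarith) (by linarith)]; congr 1; ring
  -- a good scale exists
  have hgood : (Icc (s n) M \ bad).Nonempty := by
    apply nonempty_of_measure_ne_zero (μ := volume)
    intro h0
    have hsplit : volume (Icc (s n) M) ≤ volume bad := by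
      calc volume (Icc (s n) M) ≤ volume (bad ∪ (Icc (s n) M \ bad)) :=
            measure_mono (fun x hx => by
              by_cases hb : x ∈ bad
              · exact Or.inl hb
              · exact Or.inr ⟨hx, hb⟩)
        _ ≤ volume bad + volume (Icc (s n) M \ bad) := measure_union_le _ _
        _ = volume bad := by rw [h0, add_zero]
    rw [Real.volume_Icc] at hsplit
    have := le_trans hsplit hbadvol
    rw [ENNReal.ofReal_le_ofReal_iff (by linarith)] at this
    have := hsA n
    linarith
  obtain ⟨σ, hσmem, hσbad⟩ := hgood
  have hσs : s n ≤ σ := hσmem.1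
  have hσM : σ ≤ M := hσmem.2
  have hσ1 : (1:ℝ) ≤ σ := le_trans (hs1 n) hσs
  have hσ0 : (0:ℝ) < σ := lt_of_lt_of_le one_pos hσ1
  have hσD : σ ∉ D n := fun hd => hσbad (Or.inl (Or.inl hd))
  have hσZ : σ ∉ Z₁ := fun hd => hσbad (Or.inl (Or.inr hd))
  have hσD' : σ * (s n)⁻¹ ∉ D' n := fun hd => hσbad (Or.inr hd)
  set v : ℝ := σ * (s n)⁻¹ with hvdef
  have hv1 : (1:ℝ) ≤ v := by
    rw [hvdef]; rw [← div_eq_mul_inv]; exact (one_le_div hsn0).2 hσs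
  have hvM : v ≤ M := by
    rw [hvdef]
    calc σ * (s n)⁻¹ ≤ σ * 1 := by
          apply mul_le_mul_of_nonneg_left _ hσ0.le
          exact inv_le_one_of_one_le₀ (hs1 n)
      _ = σ := mul_one σ
      _ ≤ M := hσM
  have hvsn : v * s n = σ := by rw [hvdef]; exact inv_mul_cancel_right₀ hsn0.ne' σ
  -- σ is in E n, v in E' n
  have hσE : σ ∈ E n := by
    by_contra hne
    exact hσD ⟨⟨hσ1, hσM⟩, hne⟩
  have hvE' : v ∈ E' n := by
    by_contra hne
    exact hσD' ⟨⟨hv1, hvM⟩, hne⟩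
  -- translate to statements about g
  have hgeq : g (σ * t n) = g' (σ * t n) := by
    apply hgg'
    · exact le_trans (htT n) (le_mul_of_one_le_left (htpos n).le hσ1)
    · intro hmem
      exact hσZ (Set.mem_iUnion.2 ⟨n, hmem⟩)
  have hP : |g (σ * t n) / g (t n) - σ ^ β| ≤ ε' := by
    rw [hgeq]; exact hσE n le_rfl
  have hQ : |g (σ * t n) / g (s n * t n) - v ^ β| ≤ ε' := by
    have := hvE' n le_rfl
    have harg : v * (s n * t n) = σ * t n := by
      rw [← mul_assoc, hvsn]
    rw [harg] at this
    rw [hgeq]; exact this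
  -- positivity of the g values involved
  have hgt : 0 < g (t n) := hT₀ _ hn3
  have hgst : 0 < g (s n * t n) := hT₀ _ (le_trans hn3 (htst n))
  have hgσt : 0 < g (σ * t n) := hT₀ _ (le_trans hn3
    (le_mul_of_one_le_left (htpos n).le hσ1))
  -- rpow bounds
  have hbσ := hbounds σ ⟨hσ1, hσM⟩
  have hbv := hbounds v ⟨hv1, hvM⟩
  have hbs := hbounds (s n) ⟨hs1 n, le_trans (hsA n) hAM⟩
  -- the quotient identity
  set P : ℝ := g (σ * t n) / g (t n) with hPdef
  set Q : ℝ := g (σ * t n) / g (s n * t n) with hQdef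
  have hQpos : 0 < Q := by
    have : v ^ β - ε' ≤ Q := by
      have := abs_le.1 hQ
      linarith [this.1]
    have : c - c/2 ≤ Q := le_trans (by linarith [hbv.1]) this
    linarith
  have hσrw : σ ^ β = v ^ β * (s n) ^ β := by
    rw [← hvsn, Real.mul_rpow (by linarith) hsn0.le]
  have hR : g (s n * t n) / g (t n) = P / Q := by
    rw [hPdef, hQdef, div_div_div_cancel_left' _ _ hgσt.ne']
  -- the final estimate
  have hvβ0 : 0 < v ^ β := lt_of_lt_of_le hc0 hbv.1
  have hdiff : P / Q - (s n) ^ β = (P * v ^ β - σ ^ β * Q) / (Q * v ^ β) := by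
    rw [hσrw]
    field_simp
  have hnum : |P * v ^ β - σ ^ β * Q| ≤ 2 * C * ε' := by
    have hid : P * v ^ β - σ ^ β * Q = (P - σ ^ β) * v ^ β + σ ^ β * (v ^ β - Q) := by ring
    rw [hid]
    calc |(P - σ ^ β) * v ^ β + σ ^ β * (v ^ β - Q)|
        ≤ |(P - σ ^ β) * v ^ β| + |σ ^ β * (v ^ β - Q)| := abs_add_le _ _
      _ = |P - σ ^ β| * |v ^ β| + |σ ^ β| * |v ^ β - Q| := by rw [abs_mul, abs_mul]
      _ ≤ ε' * C + C * ε' := by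
          apply add_le_add
          · apply mul_le_mul hP _ (abs_nonneg _) hε'0.le
            rw [abs_of_pos hvβ0]; exact hbv.2
          · rw [abs_of_pos (lt_of_lt_of_le hc0 hbσ.1)]
            apply mul_le_mul hbσ.2 _ (abs_nonneg _) hC0.le
            rw [abs_sub_comm]; exact hQ
      _ = 2 * C * ε' := by ring
  have hden : c/2 * c ≤ Q * v ^ β := by
    apply mul_le_mul _ hbv.1 hc0.le hQpos.le
    have := abs_le.1 hQ
    linarith [this.1, hbv.1]
  have hfinal : |g (s n * t n) / g (t n) - (s n) ^ β| ≤ ε := by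
    rw [hR, hdiff, abs_div, abs_of_pos (mul_pos hQpos hvβ0)]
    calc |P * v ^ β - σ ^ β * Q| / (Q * v ^ β) ≤ (2 * C * ε') / (c/2 * c) := by
          apply div_le_div₀ (by positivity) hnum (by positivity) hden
      _ ≤ ε := by
          have h4 : ε' * (4 * C) ≤ ε * c ^ 2 := (le_div_iff₀ (by positivity)).1 hε'ε
          rw [div_le_iff₀ (by positivity)]
          nlinarith
  exact absurd hfinal (not_le.2 (hbad n))

/-- A function satisfying the uniform bound of regular variation with positive index
tends to infinity. -/
lemma rv_tendsto_atTop {g : ℝ → ℝ} {δ : ℝ} (hδ : 0 < δ)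
    (hpos : ∀ᶠ t in atTop, 0 < g t)
    (huct : ∀ A : ℝ, 1 < A → ∀ ε : ℝ, 0 < ε →
      ∀ᶠ t in atTop, ∀ s ∈ Icc (1:ℝ) A, |g (s * t) / g t - s ^ δ| ≤ ε) :
    Tendsto g atTop atTop := by
  set A : ℝ := max 2 ((4:ℝ) ^ (1/δ)) with hAdef
  have hA : (1:ℝ) < A := lt_of_lt_of_le one_lt_two (le_max_left _ _)
  have hA0 : (0:ℝ) < A := by linarith
  have hA4 : (4:ℝ) ≤ A ^ δ := by
    have h1 : ((4:ℝ) ^ (1/δ)) ≤ A := le_max_right _ _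
    have h2 : ((4:ℝ) ^ (1/δ)) ^ δ = 4 := by
      rw [← Real.rpow_mul (by norm_num : (0:ℝ) ≤ 4), one_div, inv_mul_cancel₀ hδ.ne',
        Real.rpow_one]
    calc (4:ℝ) = ((4:ℝ) ^ (1/δ)) ^ δ := h2.symm
      _ ≤ A ^ δ := Real.rpow_le_rpow (Real.rpow_nonneg (by norm_num) _) h1 hδ.le
  obtain ⟨T₁, hT₁⟩ := eventually_atTop.mp
    (((huct A hA (1/2) (by norm_num)).and hpos).and (eventually_ge_atTop (1:ℝ)))
  have hT₁self := hT₁ T₁ le_rfl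
  have hT₁1 : (1:ℝ) ≤ T₁ := hT₁self.2
  have hT₁pos : (0:ℝ) < T₁ := lt_of_lt_of_le one_pos hT₁1
  have key1 : ∀ t, T₁ ≤ t → ∀ s ∈ Icc (1:ℝ) A, g t / 2 ≤ g (s * t) := by
    intro t htt s hsmem
    obtain ⟨⟨hu, hgt⟩, _⟩ := hT₁ t htt
    have h1 := (abs_le.1 (hu s hsmem)).1
    have hsδ : (1:ℝ) ≤ s ^ δ := Real.one_le_rpow hsmem.1 hδ.le
    have : (1:ℝ)/2 ≤ g (s * t) / g t := by linarith
    calc g t / 2 = (1/2) * g t := by ring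
      _ ≤ (g (s * t) / g t) * g t := mul_le_mul_of_nonneg_right this hgt.le
      _ = g (s * t) := div_mul_cancel₀ _ hgt.ne'
  have key2 : ∀ t, T₁ ≤ t → 2 * g t ≤ g (A * t) := by
    intro t htt
    obtain ⟨⟨hu, hgt⟩, _⟩ := hT₁ t htt
    have h1 := (abs_le.1 (hu A ⟨hA.le, le_rfl⟩)).1
    have : (2:ℝ) ≤ g (A * t) / g t := by linarith
    calc 2 * g t ≤ (g (A * t) / g t) * g t := mul_le_mul_of_nonneg_right this hgt.le
      _ = g (A * t) := div_mul_cancel₀ _ hgt.ne'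
  have hApow : ∀ n : ℕ, (1:ℝ) ≤ A ^ n := fun n => one_le_pow₀ hA.le
  have hAT : ∀ n : ℕ, T₁ ≤ A ^ n * T₁ := fun n =>
    le_mul_of_one_le_left hT₁pos.le (hApow n)
  have gkn : ∀ n : ℕ, 2 ^ n * g T₁ ≤ g (A ^ n * T₁) := by
    intro n
    induction n with
    | zero => simp
    | succ k ih =>
      have h1 := key2 (A ^ k * T₁) (hAT k)
      calc 2 ^ (k+1) * g T₁ = 2 * (2 ^ k * g T₁) := by ring
        _ ≤ 2 * g (A ^ k * T₁) := by
            have hgT : 0 < g T₁ := (hT₁self.1).2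
            nlinarith [ih]
        _ ≤ g (A * (A ^ k * T₁)) := h1
        _ = g (A ^ (k+1) * T₁) := by ring_nf
  have step : ∀ n : ℕ, ∀ x : ℝ, A ^ n * T₁ ≤ x → x ≤ A ^ (n+1) * T₁ →
      2 ^ n * g T₁ / 2 ≤ g x := by
    intro n x hx1 hx2
    have hAnT : (0:ℝ) < A ^ n * T₁ := mul_pos (by positivity) hT₁pos
    set s : ℝ := x / (A ^ n * T₁) with hsdef
    have hs1 : (1:ℝ) ≤ s := (one_le_div hAnT).2 hx1
    have hsA : s ≤ A := by
      rw [hsdef, div_le_iff₀ hAnT]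
      calc x ≤ A ^ (n+1) * T₁ := hx2
        _ = A * (A ^ n * T₁) := by ring
    have hxs : x = s * (A ^ n * T₁) := by
      rw [hsdef]; field_simp
    have := key1 (A ^ n * T₁) (hAT n) s ⟨hs1, hsA⟩
    rw [← hxs] at this
    calc 2 ^ n * g T₁ / 2 ≤ g (A ^ n * T₁) / 2 := by linarith [gkn n]
      _ ≤ g x := this
  rw [tendsto_atTop]
  intro b
  have hgT : 0 < g T₁ := (hT₁self.1).2
  obtain ⟨n, hn⟩ := pow_unbounded_of_one_lt ((2 * b)/(g T₁)) (one_lt_two (α := ℝ))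
  have hbn : b ≤ 2 ^ n * g T₁ / 2 := by
    rw [div_lt_iff₀ hgT] at hn
    linarith
  rw [eventually_atTop]
  refine ⟨A ^ n * T₁, fun x hx => ?_⟩
  have hex : ∃ k : ℕ, x < A ^ k * T₁ := by
    obtain ⟨k, hk⟩ := pow_unbounded_of_one_lt (x / T₁) hA
    exact ⟨k, by rwa [div_lt_iff₀ hT₁pos] at hk⟩
  set k := Nat.find hex with hkdef
  have hk := Nat.find_spec hex
  rw [← hkdef] at hk
  have hk0 : k ≠ 0 := by
    intro h0
    rw [h0] at hk
    simp only [pow_zero, one_mul] at hk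
    have : T₁ ≤ x := le_trans (hAT n) hx
    linarith
  obtain ⟨m, hm⟩ : ∃ m, k = m + 1 := ⟨k - 1, (Nat.succ_pred_eq_of_pos (Nat.pos_of_ne_zero hk0)).symm⟩
  have hmlow : A ^ m * T₁ ≤ x := by
    by_contra hcon2
    push_neg at hcon2
    exact Nat.find_min hex (by omega) hcon2
  have hmn : n ≤ m := by
    by_contra hcon2
    push_neg at hcon2
    have h1 : A ^ (m+1) ≤ A ^ n := pow_le_pow_right₀ hA.le (by omega)
    have : A ^ n * T₁ < A ^ (m+1) * T₁ := lt_of_le_of_lt hx (by rw [← hm]; exact hk)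
    nlinarith [hT₁pos]
  rw [hm] at hk
  have := step m x hmlow hk.le
  calc b ≤ 2 ^ n * g T₁ / 2 := hbn
    _ ≤ 2 ^ m * g T₁ / 2 := by
        have : (2:ℝ) ^ n ≤ 2 ^ m := pow_le_pow_right₀ one_le_two hmn
        nlinarith
    _ ≤ g x := this

/-- Karamata's theorem (ratio form): for a.e.-measurable regularly varying `g` of
index `β > -1`, `(∫_t^{at} g) / (t g(t)) → (a^(β+1)-1)/(β+1)`. -/
lemma karamata {g g' : ℝ → ℝ} {T T₁ β : ℝ} (hβ : -1 < β) (hg' : Measurable g')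
    (hae : volume {x | T ≤ x ∧ g x ≠ g' x} = 0)
    (hpos : ∀ᶠ t in atTop, 0 < g t)
    (hrv : ∀ a : ℝ, 0 < a → Tendsto (fun t => g (a * t) / g t) atTop (nhds (a ^ β)))
    (hloc : LocallyIntegrableOn g (Ici T₁))
    {a : ℝ} (ha : 1 < a) :
    Tendsto (fun t => (∫ u in t..(a*t), g u) / (t * g t)) atTop
      (nhds ((a ^ (β+1) - 1)/(β+1))) := by
  rw [Metric.tendsto_nhds]
  intro ε hε
  have hε' : 0 < ε / (2 * (a - 1)) := by
    apply div_pos hε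
    linarith
  filter_upwards [uct hg' hae hpos hrv ha hε', hpos, eventually_ge_atTop (max T₁ 1)]
    with t hunif hgt ht1
  have htT₁ : T₁ ≤ t := le_trans (le_max_left _ _) ht1
  have ht0 : (0:ℝ) < t := lt_of_lt_of_le one_pos (le_trans (le_max_right _ _) ht1)
  have htat : t ≤ a * t := le_mul_of_one_le_left ht0.le ha.le
  -- integrability
  have hgint : IntervalIntegrable g volume t (a*t) := by
    rw [intervalIntegrable_iff_integrableOn_Icc_of_le htat]
    exact hloc.integrableOn_compact_subset
      (fun x hx => le_trans htT₁ hx.1) isCompact_Icc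
  have hgiint : IntervalIntegrable (fun s => g (s * t)) volume 1 a := by
    have := hgint.comp_mul_right (c := t)
    rwa [div_self ht0.ne', mul_div_assoc, div_self ht0.ne', mul_one] at this
  -- change of variables
  have hcov : (∫ u in t..(a*t), g u) = t * ∫ s in (1:ℝ)..a, g (s * t) := by
    have := intervalIntegral.integral_comp_mul_right g ht0.ne' (a := 1) (b := a)
    rw [one_mul] at this
    rw [this, smul_eq_mul, ← mul_assoc, mul_inv_cancel₀ ht0.ne', one_mul]
  have hmain : (∫ u in t..(a*t), g u) / (t * g t) = ∫ s in (1:ℝ)..a, g (s * t) / g t := by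
    rw [hcov, intervalIntegral.integral_div]
    field_simp
  rw [hmain, Real.dist_eq]
  have hrint : IntervalIntegrable (fun s : ℝ => s ^ β) volume 1 a :=
    intervalIntegral.intervalIntegrable_rpow' (by linarith)
  have hrpval : (∫ s in (1:ℝ)..a, s ^ β) = (a ^ (β+1) - 1)/(β+1) := by
    rw [integral_rpow (Or.inl hβ), Real.one_rpow]
  rw [← hrpval, ← intervalIntegral.integral_sub (hgiint.div_const _) hrint]
  have hbound : |∫ s in (1:ℝ)..a, (g (s * t) / g t - s ^ β)| ≤ (ε / (2 * (a-1))) * |a - 1| := by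
    rw [← Real.norm_eq_abs]
    apply intervalIntegral.norm_integral_le_of_norm_le_const
    intro x hx
    rw [Set.uIoc_of_le ha.le] at hx
    exact hunif x ⟨hx.1.le, hx.2⟩
  rw [abs_of_pos (by linarith : (0:ℝ) < a - 1)] at hbound
  calc |∫ s in (1:ℝ)..a, (g (s * t) / g t - s ^ β)| ≤ (ε / (2 * (a-1))) * (a - 1) := hbound
    _ = ε / 2 := by
        have hne : a - 1 ≠ 0 := by linarith
        field_simp
    _ < ε := by linarith

/-- `h` is a hazard rate for the upper tail of `F` on `[t₀, ∞)`:
`F̄(t₀) > 0`, `h` is nonnegative and locally integrable on `[t₀, ∞)`, and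
`F̄(t) = F̄(t₀) · exp(−∫_{t₀}^t h(u) du)` for all `t ≥ t₀`. -/
def HasHazardRate (F h : ℝ → ℝ) (t₀ : ℝ) : Prop :=
  0 < 1 - F t₀ ∧ (∀ t, t₀ ≤ t → 0 ≤ h t) ∧
    MeasureTheory.LocallyIntegrableOn h (Set.Ici t₀) ∧
    ∀ t, t₀ ≤ t → 1 - F t = (1 - F t₀) * Real.exp (-(∫ u in t₀..t, h u))

/-- `g`, positive on a neighborhood of `∞`, is regularly varying of index `ρ`:
for every `a > 0`, `g(at)/g(t) → a^ρ` as `t → ∞`. -/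
def RegularlyVarying (g : ℝ → ℝ) (ρ : ℝ) : Prop :=
  (∀ᶠ t in Filter.atTop, 0 < g t) ∧
    ∀ a : ℝ, 0 < a →
      Filter.Tendsto (fun t => g (a * t) / g t) Filter.atTop (nhds (a ^ ρ))

/-- `g` is smoothly varying of index `α` and order `m`: `g` is `m` times continuously
differentiable on a neighborhood of `∞` and `g^(m)` is regularly varying of index `α − m`. -/
def SmoothlyVarying (g : ℝ → ℝ) (α : ℝ) (m : ℕ) : Prop :=
  (∃ T : ℝ, ContDiffOn ℝ (m : ℕ∞) g (Set.Ici T)) ∧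
    RegularlyVarying (iteratedDeriv m g) (α - m)

/-- Condition (BasicH): `h` is regularly varying of some index, `t·h(t) → ∞`
and `h(t) → 0` as `t → ∞`. -/
def BasicH (h : ℝ → ℝ) : Prop :=
  (∃ ρ : ℝ, RegularlyVarying h ρ) ∧
    Filter.Tendsto (fun t => t * h t) Filter.atTop Filter.atTop ∧
    Filter.Tendsto h Filter.atTop (nhds 0)

/-- `F` is a cumulative distribution function on `ℝ`. -/
def IsCDF (F : ℝ → ℝ) : Prop :=
  Monotone F ∧ (∀ x, ContinuousWithinAt F (Set.Ici x) x) ∧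
    Filter.Tendsto F Filter.atBot (nhds 0) ∧ Filter.Tendsto F Filter.atTop (nhds 1)

/-- `h₋` is a hazard rate for the lower tail of `F` on `[t₀, ∞)`:
`F(−t₀) > 0` and `F(−t) = F(−t₀) · exp(−∫_{t₀}^t h₋(u) du)` for all `t ≥ t₀`. -/
def HasLowerHazardRate (F hm : ℝ → ℝ) (t₀ : ℝ) : Prop :=
  0 < F (-t₀) ∧ (∀ t, t₀ ≤ t → 0 ≤ hm t) ∧
    MeasureTheory.LocallyIntegrableOn hm (Set.Ici t₀) ∧
    ∀ t, t₀ ≤ t → F (-t) = F (-t₀) * Real.exp (-(∫ u in t₀..t, hm u))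

lemma part1 {F h hm : ℝ → ℝ} {t₀ : ℝ} (hup : HasHazardRate F h t₀)
    (hlow : HasLowerHazardRate F hm t₀)
    {L : ℝ} (hL : 0 < L)
    (hbal : Tendsto (fun t => (1 - F t) / F (-t)) atTop (nhds L)) :
    Tendsto (fun t => ∫ u in t₀..t, (h u - hm u)) atTop
      (nhds (-Real.log (L * (F (-t₀) / (1 - F t₀))))) := by
  obtain ⟨hC₁, hh0, hhloc, hhrep⟩ := hup
  obtain ⟨hC₂, hm0, hmloc, hmrep⟩ := hlow
  have hii : ∀ t, t₀ ≤ t → IntervalIntegrable h volume t₀ t := fun t ht =>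
    (intervalIntegrable_iff_integrableOn_Icc_of_le ht).2
      (hhloc.integrableOn_compact_subset Icc_subset_Ici_self isCompact_Icc)
  have hmii : ∀ t, t₀ ≤ t → IntervalIntegrable hm volume t₀ t := fun t ht =>
    (intervalIntegrable_iff_integrableOn_Icc_of_le ht).2
      (hmloc.integrableOn_compact_subset Icc_subset_Ici_self isCompact_Icc)
  have key : ∀ t, t₀ ≤ t → (∫ u in t₀..t, (h u - hm u)) =
      -Real.log ((1 - F t) / F (-t) * (F (-t₀) / (1 - F t₀))) := by
    intro t ht
    have e1 := hhrep t ht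
    have e2 := hmrep t ht
    have hsub : (∫ u in t₀..t, (h u - hm u)) =
        (∫ u in t₀..t, h u) - ∫ u in t₀..t, hm u :=
      intervalIntegral.integral_sub (hii t ht) (hmii t ht)
    set Hh := ∫ u in t₀..t, h u with hHh
    set Hm := ∫ u in t₀..t, hm u with hHm
    have hratio : (1 - F t) / F (-t) * (F (-t₀) / (1 - F t₀)) = Real.exp (Hm - Hh) := by
      rw [e1, e2]
      rw [show Real.exp (Hm - Hh) = Real.exp (-Hh) / Real.exp (-Hm) by
        rw [← Real.exp_sub]; ring_nf]
      field_simp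
    rw [hsub, hratio, Real.log_exp]
    ring
  have hlim := (hbal.mul_const (F (-t₀) / (1 - F t₀))).log
    (ne_of_gt (mul_pos hL (div_pos hC₂ hC₁)))
  refine Tendsto.congr' ?_ hlim.neg
  filter_upwards [eventually_ge_atTop t₀] with t ht
  exact (key t ht).symm
/-- for a tail-balanced `F`, `∫_{t₀}^t (h − h₋)` has a finite limit, and if
`h`, `h₋` are regularly varying of indices `> −1` then `h(t)/h₋(t) → 1`. -/
theorem stmt_5 (F h hm : ℝ → ℝ) (t₀ : ℝ) (hF : IsCDF F)
    (hup : HasHazardRate F h t₀)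
    (hlow : HasLowerHazardRate F hm t₀)
    (hbal : ∃ L : ℝ, 0 < L ∧
      Filter.Tendsto (fun t => (1 - F t) / F (-t)) Filter.atTop (nhds L)) :
    (∃ l : ℝ, Filter.Tendsto (fun t => ∫ u in t₀..t, (h u - hm u)) Filter.atTop (nhds l)) ∧
    (∀ β β' : ℝ, -1 < β → -1 < β' → RegularlyVarying h β → RegularlyVarying hm β' →
      Filter.Tendsto (fun t => h t / hm t) Filter.atTop (nhds 1)) := by
  obtain ⟨L, hL, hbal'⟩ := hbal
  have hDlim := part1 hup hlow hL hbal'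
  refine ⟨⟨_, hDlim⟩, ?_⟩
  intro β β' hβ hβ' hRV hRVm
  -- measurable representatives of h and hm
  have hmeas : ∀ f : ℝ → ℝ, LocallyIntegrableOn f (Ici t₀) →
      ∃ f' : ℝ → ℝ, Measurable f' ∧ volume {x | t₀ ≤ x ∧ f x ≠ f' x} = 0 := by
    intro f hfloc
    obtain ⟨f', hsm, haef⟩ := hfloc.aestronglyMeasurable
    refine ⟨f', hsm.measurable, ?_⟩
    have h0 := ae_iff.mp haef
    rw [Measure.restrict_apply' measurableSet_Ici] at h0
    have hseteq : {x | t₀ ≤ x ∧ f x ≠ f' x} = {x | ¬ f x = f' x} ∩ Ici t₀ := by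
      ext x; simp [Set.mem_Ici, and_comm]
    rw [hseteq]
    exact h0
  obtain ⟨h', hh'meas, hh'ae⟩ := hmeas h hup.2.2.1
  obtain ⟨hm', hm'meas, hm'ae⟩ := hmeas hm hlow.2.2.1
  -- Karamata limits
  have Kh : ∀ a : ℝ, 1 < a → Tendsto (fun t => (∫ u in t..(a*t), h u) / (t * h t)) atTop
      (nhds ((a ^ (β+1) - 1)/(β+1))) := fun a ha =>
    karamata hβ hh'meas hh'ae hRV.1 hRV.2 hup.2.2.1 ha
  have Km : ∀ a : ℝ, 1 < a → Tendsto (fun t => (∫ u in t..(a*t), hm u) / (t * hm t)) atTop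
      (nhds ((a ^ (β'+1) - 1)/(β'+1))) := fun a ha =>
    karamata hβ' hm'meas hm'ae hRVm.1 hRVm.2 hlow.2.2.1 ha
  -- growth of t * hm t
  have hposG : ∀ᶠ t in atTop, 0 < t * hm t := by
    filter_upwards [hRVm.1, eventually_gt_atTop (0:ℝ)] with t h1 h2
    exact mul_pos h2 h1
  have huctG : ∀ A : ℝ, 1 < A → ∀ ε : ℝ, 0 < ε →
      ∀ᶠ t in atTop, ∀ s ∈ Icc (1:ℝ) A,
        |(s * t) * hm (s * t) / (t * hm t) - s ^ (β'+1)| ≤ ε := by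
    intro A hA ε hε
    have hA0 : (0:ℝ) < A := by linarith
    have hεA : 0 < ε / A := div_pos hε hA0
    filter_upwards [uct hm'meas hm'ae hRVm.1 hRVm.2 hA hεA, hRVm.1,
      eventually_gt_atTop (0:ℝ)] with t hu h1 h2
    intro x hxmem
    have hx0 : (0:ℝ) < x := lt_of_lt_of_le one_pos hxmem.1
    have heq : (x * t) * hm (x * t) / (t * hm t) = x * (hm (x * t) / hm t) := by
      field_simp
    have hrw : x ^ (β'+1) = x ^ β' * x := Real.rpow_add_one hx0.ne' β'
    rw [heq, hrw]
    have hid : x * (hm (x * t) / hm t) - x ^ β' * x = x * (hm (x * t) / hm t - x ^ β') := by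
      ring
    rw [hid, abs_mul, abs_of_pos hx0]
    calc x * |hm (x * t) / hm t - x ^ β'| ≤ A * (ε / A) :=
          mul_le_mul hxmem.2 (hu x hxmem) (abs_nonneg _) hA0.le
      _ = ε := by field_simp
  have hGtop : Tendsto (fun t => t * hm t) atTop atTop :=
    rv_tendsto_atTop (by linarith : (0:ℝ) < β' + 1) hposG huctG
  -- interval integrability facts
  have hiih : ∀ x y : ℝ, t₀ ≤ x → x ≤ y → IntervalIntegrable h volume x y := fun x y hx hxy =>
    (intervalIntegrable_iff_integrableOn_Icc_of_le hxy).2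
      (hup.2.2.1.integrableOn_compact_subset
        (fun z hz => le_trans hx hz.1) isCompact_Icc)
  have hiim : ∀ x y : ℝ, t₀ ≤ x → x ≤ y → IntervalIntegrable hm volume x y := fun x y hx hxy =>
    (intervalIntegrable_iff_integrableOn_Icc_of_le hxy).2
      (hlow.2.2.1.integrableOn_compact_subset
        (fun z hz => le_trans hx hz.1) isCompact_Icc)
  -- the limit of the quotient for each a > 1
  have hq : ∀ a : ℝ, 1 < a → Tendsto (fun t => h t / hm t) atTop
      (nhds (((a ^ (β'+1) - 1)/(β'+1)) / ((a ^ (β+1) - 1)/(β+1)))) := by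
    intro a ha
    have ha0 : (0:ℝ) < a := by linarith
    have hKh := Kh a ha
    have hKm := Km a ha
    have hAβpos : 0 < (a ^ (β+1) - 1)/(β+1) := by
      apply div_pos _ (by linarith)
      have h1 : 1 < a ^ (β+1) :=
        (Real.one_lt_rpow_iff_of_pos ha0).2 (Or.inl ⟨ha, by linarith⟩)
      linarith
    have hNG : Tendsto (fun t => ((∫ u in t₀..(a*t), (h u - hm u)) -
        ∫ u in t₀..t, (h u - hm u)) / (t * hm t)) atTop (nhds 0) := by
      have hat : Tendsto (fun t : ℝ => a * t) atTop atTop :=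
        Tendsto.const_mul_atTop ha0 tendsto_id
      have h1 : Tendsto (fun t => ∫ u in t₀..(a*t), (h u - hm u)) atTop
          (nhds (-Real.log (L * (F (-t₀) / (1 - F t₀))))) := hDlim.comp hat
      have h2 : Tendsto (fun t => (∫ u in t₀..(a*t), (h u - hm u)) -
          ∫ u in t₀..t, (h u - hm u)) atTop (nhds 0) := by
        simpa using h1.sub hDlim
      exact Tendsto.div_atTop h2 hGtop
    have hcomb := (hNG.add hKm).div hKh hAβpos.ne'
    rw [zero_add] at hcomb
    refine Tendsto.congr' ?_ hcomb
    filter_upwards [hRV.1, hRVm.1, eventually_ge_atTop (max t₀ 1),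
      (Kh a ha).eventually_ne hAβpos.ne'] with t hht hhmt htlarge hune
    have ht₀ : t₀ ≤ t := le_trans (le_max_left _ _) htlarge
    have ht0 : (0:ℝ) < t := lt_of_lt_of_le one_pos (le_trans (le_max_right _ _) htlarge)
    have htat : t ≤ a * t := le_mul_of_one_le_left ht0.le ha.le
    have hta₀ : t₀ ≤ a * t := le_trans ht₀ htat
    -- rewrite the numerator difference as an integral over [t, at]
    have hsub1 : (∫ u in t₀..(a*t), (h u - hm u)) - ∫ u in t₀..t, (h u - hm u) =
        ∫ u in t..(a*t), (h u - hm u) :=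
      intervalIntegral.integral_interval_sub_left
        ((hiih t₀ (a*t) le_rfl hta₀).sub (hiim t₀ (a*t) le_rfl hta₀))
        ((hiih t₀ t le_rfl ht₀).sub (hiim t₀ t le_rfl ht₀))
    have hsub2 : (∫ u in t..(a*t), (h u - hm u)) =
        (∫ u in t..(a*t), h u) - ∫ u in t..(a*t), hm u :=
      intervalIntegral.integral_sub (hiih t (a*t) ht₀ htat) (hiim t (a*t) ht₀ htat)
    set Ih := ∫ u in t..(a*t), h u with hIh
    set Im := ∫ u in t..(a*t), hm u with hIm
    have hIhne : Ih ≠ 0 := by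
      intro h0
      apply hune
      rw [← hIh] at *
      rw [h0, zero_div]
    have hnum : ((∫ u in t₀..(a*t), (h u - hm u)) - ∫ u in t₀..t, (h u - hm u)) = Ih - Im := by
      rw [hsub1, hsub2]
    have hhtne : h t ≠ 0 := hht.ne'
    have hhmtne : hm t ≠ 0 := hhmt.ne'
    simp only [Pi.div_apply]
    rw [hnum, ← hIh, ← hIm]
    field_simp [hIhne, ht0.ne', hhtne, hhmtne]
    ring
  -- uniqueness of the limit forces the value 1
  set Ψ : ℝ → ℝ := fun a => ((a ^ (β'+1) - 1)/(β'+1)) / ((a ^ (β+1) - 1)/(β+1)) with hΨdef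
  have huniq : ∀ a : ℝ, 1 < a → Ψ a = Ψ 2 := fun a ha =>
    tendsto_nhds_unique (hq a ha) (hq 2 one_lt_two)
  have hslope : ∀ γ : ℝ, Tendsto (fun a : ℝ => (a ^ γ - 1)/(a - 1))
      (nhdsWithin 1 (Ioi 1)) (nhds γ) := by
    intro γ
    have hd : HasDerivAt (fun x : ℝ => x ^ γ) (γ * (1:ℝ) ^ (γ-1)) 1 :=
      Real.hasDerivAt_rpow_const (Or.inl one_ne_zero)
    rw [Real.one_rpow, mul_one] at hd
    rw [hasDerivAt_iff_tendsto_slope] at hd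
    have hmono : nhdsWithin (1:ℝ) (Ioi 1) ≤ nhdsWithin 1 {(1:ℝ)}ᶜ :=
      nhdsWithin_mono 1 (fun x hx => ne_of_gt hx)
    refine Tendsto.congr ?_ (hd.mono_left hmono)
    intro a
    rw [slope_def_field, Real.one_rpow]
  have hΨ1 : Tendsto Ψ (nhdsWithin 1 (Ioi 1)) (nhds 1) := by
    have h1 := (hslope (β'+1)).div (hslope (β+1)) (by linarith : β + 1 ≠ 0)
    have h2 := h1.mul_const ((β+1)/(β'+1))
    have hlimval : (β'+1)/(β+1) * ((β+1)/(β'+1)) = 1 := by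
      rw [div_mul_div_comm, mul_comm (β+1) (β'+1),
        div_self (mul_ne_zero (by linarith : β'+1 ≠ 0) (by linarith : β+1 ≠ 0))]
    rw [hlimval] at h2
    refine Tendsto.congr' ?_ h2
    filter_upwards [self_mem_nhdsWithin] with a ha
    have ha1 : (1:ℝ) < a := ha
    have ha0 : (0:ℝ) < a := by linarith
    have h3 : a - 1 ≠ 0 := by
      intro h0; rw [sub_eq_zero] at h0; exact absurd h0.symm (ne_of_lt ha1)
    have h4 : a ^ (β+1) - 1 ≠ 0 := by
      have : 1 < a ^ (β+1) := (Real.one_lt_rpow_iff_of_pos ha0).2 (Or.inl ⟨ha1, by linarith⟩)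
      intro h0; rw [sub_eq_zero] at h0; rw [h0] at this; linarith
    rw [hΨdef]
    have hβ1 : β + 1 ≠ 0 := by linarith
    have hβ'1 : β' + 1 ≠ 0 := by linarith
    simp only [Pi.div_apply]
    field_simp
  have hΨ2 : Ψ 2 = 1 := by
    have hconst : Tendsto (fun _ : ℝ => Ψ 2) (nhdsWithin 1 (Ioi 1)) (nhds 1) := by
      refine Tendsto.congr' ?_ hΨ1
      filter_upwards [self_mem_nhdsWithin] with a ha
      exact huniq a ha
    exact tendsto_nhds_unique tendsto_const_nhds hconst
  have hfin := hq 2 one_lt_two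
  have : ((2:ℝ) ^ (β'+1) - 1)/(β'+1) / (((2:ℝ) ^ (β+1) - 1)/(β+1)) = 1 := hΨ2
  rw [this] at hfin
  exact hfin
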